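/- Let g be a consistent piecewise quadratic with pieces p₁,...,p_N and indexing function I_g. Then g*(β) = p_{I_g(β)}*(β) for every β ∈ ℝ, where g* and p_k* denote Fenchel conjugates. -/

import Mathlib

/-- For a consistent piecewise quadratic `g` with indexing function value `kβ` at `β`,
the conjugate satisfies `g*(β) = p_{kβ}*(β)` (and the supremum is attained). -/
theorem stmt_16 (N : ℕ) (hN : 0 < N)
    (τ : Fin (N + 1) → EReal) (hτ : StrictMono τ)
    (hτ0 : τ 0 = ⊥) (hτN : τ (Fin.last N) = ⊤)
    (a b c : Fin N → ℝ) (ha : ∀ k, 0 < a k)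
    (g : ℝ → ℝ)
    (hagree : ∀ (k : Fin N) (α : ℝ), τ k.castSucc ≤ (α : EReal) → (α : EReal) ≤ τ k.succ →
      g α = a k * α ^ 2 + b k * α + c k)
    (hmin : ∀ (α : ℝ) (k : Fin N), g α ≤ a k * α ^ 2 + b k * α + c k)
    (β : ℝ) (kβ : Fin N)
    (hkβ : IsLeast {j : Fin N | ∃ αs : ℝ, (∀ α : ℝ, β * α - g α ≤ β * αs - g αs) ∧
      τ j.castSucc ≤ (αs : EReal) ∧ (αs : EReal) ≤ τ j.succ} kβ) :
    IsGreatest {y : ℝ | ∃ α : ℝ, y = β * α - g α}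
      ((β - b kβ) ^ 2 / (4 * a kβ) - c kβ) := by
  obtain ⟨⟨αs, hmax, hlo, hhi⟩, -⟩ := hkβ
  set A := a kβ with hA
  set B := b kβ
  set C := c kβ
  have haK : 0 < A := ha kβ
  set αst : ℝ := (β - B) / (2 * A) with hαst
  have hval : β * αst - (A * αst ^ 2 + B * αst + C) = (β - B) ^ 2 / (4 * A) - C := by
    rw [hαst]
    field_simp [hαst]
    ring
  have hub : ∀ α : ℝ, β * α - (A * α ^ 2 + B * α + C) ≤ (β - B) ^ 2 / (4 * A) - C := by
    intro α
    have h1 : β * α - (A * α ^ 2 + B * α + C) = (β - B) ^ 2 / (4 * A) - C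
        - A * (α - αst) ^ 2 := by
      rw [hαst]
      field_simp [hαst]
      ring
    nlinarith [sq_nonneg (α - αst), mul_nonneg haK.le (sq_nonneg (α - αst))]
  have hgs : g αs = A * αs ^ 2 + B * αs + C := hagree kβ αs hlo hhi
  have hM : β * αs - g αs = (β - B) ^ 2 / (4 * A) - C := by
    have hle : β * αs - g αs ≤ (β - B) ^ 2 / (4 * A) - C := by
      rw [hgs]; exact hub αs
    have hge : (β - B) ^ 2 / (4 * A) - C ≤ β * αs - g αs := by
      calc (β - B) ^ 2 / (4 * A) - C = β * αst - (A * αst ^ 2 + B * αst + C) := hval.symm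
        _ ≤ β * αst - g αst := by linarith [hmin αst kβ]
        _ ≤ β * αs - g αs := hmax αst
    linarith
  constructor
  · exact ⟨αs, hM.symm⟩
  · rintro y ⟨α, rfl⟩
    calc β * α - g α ≤ β * αs - g αs := hmax α
      _ = _ := hM
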